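/- The map B : C⁺(G) → C⁺(G−v) defined by B(φ)(K,S) = ∑_{i∈ℤ} φ((K,m(v)+2i),S) (for K ∈ Char(G−v) and S ⊆ V−v) is an 𝔽[U]-equivariant chain map, i.e. δ∘B = B∘δ and B commutes with multiplication by U. -/

import Mathlib

/-!
Common setup: the lattice cohomology complex of a weighted graph
(Némethi; J. Greene, "A surgery triangle for lattice cohomology").

A finite graph `G` with integer weights on vertices and signs on (multi-)edges is
encoded by its symmetric incidence data `M : V → V → ℤ`: for `u ≠ w` the entry
`M u w` is the signed number of edges joining `u` and `w`, and `M u u = m(u)` is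
the weight of `u`.  This is exactly the data of the intersection pairing `(·,·)`
on `L(G) = ℤ⟨E_u : u ∈ V⟩`, via `M u w = (E_u, E_w)`.
-/

noncomputable section

open Function

/-- A graph with integer vertex weights and signed multi-edges, encoded by the
symmetric pairing data `M u w = (E_u, E_w)` on `L(G)`. -/
structure WGraph (V : Type*) where
  M : V → V → ℤ
  symm : ∀ u w, M u w = M w u

variable {V : Type*} [Fintype V] [DecidableEq V]

/-- Evaluation of `K ∈ Hom(L(G), ℤ)` (recorded by its components `K u = K(E_u)`)
on a lattice vector `x = ∑ x_u E_u ∈ L(G)`. -/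
def evalK (K x : V → ℤ) : ℤ := ∑ u, K u * x u

/-- `E_T = ∑_{j ∈ T} E_j ∈ L(G)`. -/
def eVec (T : Finset V) : V → ℤ := fun u => if u ∈ T then 1 else 0

/-- Splitting a sum over `V` at a vertex `v`. -/
theorem sum_split (v : V) (f : V → ℤ) :
    ∑ u, f u = f v + ∑ u : {u : V // u ≠ v}, f u.1 := by
  rw [Fintype.sum_eq_add_sum_compl v f]
  congr 1
  exact Finset.sum_subtype _ (fun x => by simp) f

namespace WGraph

/-- The symmetric bilinear pairing `(x, y)` on `L(G)`. -/
def pair (G : WGraph V) (x y : V → ℤ) : ℤ := ∑ u, ∑ w, G.M u w * x u * y w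

/-- `K ∈ Hom(L(G),ℤ)` is characteristic: `(K,x) ≡ (x,x) (mod 2)` for all `x ∈ L(G)`. -/
def IsChar (G : WGraph V) (K : V → ℤ) : Prop :=
  ∀ x : V → ℤ, evalK K x ≡ G.pair x x [ZMOD 2]

/-- The set `Char(G)` of characteristic vectors, as a type. -/
def Ch (G : WGraph V) : Type _ := {K : V → ℤ // G.IsChar K}

/-- `K + 2x ∈ Hom(L(G),ℤ)`, for `K ∈ Hom(L(G),ℤ)` and `x ∈ L(G)` (a lattice vector
is viewed in `Hom(L(G),ℤ)` via the pairing). -/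
def chAdd (G : WGraph V) (K x : V → ℤ) : V → ℤ := fun u => K u + 2 * G.pair x (eVec {u})

/-- The difference `q(K + 2x) − q(K) = −((K,x) + (x,x))/2`, where `q(y) = −(y,y)/8`;
it is an integer whenever `K` is characteristic. -/
def qdiff (G : WGraph V) (K x : V → ℤ) : ℤ := (-(evalK K x + G.pair x x)) / 2

/-- The difference `q(K,S) − q(K) = max { q(K + 2E_T) − q(K) : T ⊆ S }`, where
`q(K,S) = max { q(K + 2 ∑_{j∈T} E_j) : T ⊆ S }`. -/
def qrel (G : WGraph V) (K : V → ℤ) (S : Finset V) : ℤ :=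
  S.powerset.sup' (Finset.powerset_nonempty S) fun T => G.qdiff K (eVec T)

/-- `G₊₁(v)`: increase the weight `m(v)` of the vertex `v` by one. -/
def bump (G : WGraph V) (v : V) : WGraph V where
  M u w := if u = v ∧ w = v then G.M u w + 1 else G.M u w
  symm u w := by
    have h := G.symm u w
    by_cases hu : u = v <;> by_cases hw : w = v <;> simp [hu, hw, h] <;>
      exact G.symm _ _

/-- `G − v`: delete the vertex `v` and all incident edges. -/
def delete (G : WGraph V) (v : V) : WGraph {u : V // u ≠ v} where
  M u w := G.M u.1 w.1
  symm u w := G.symm u.1 w.1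

theorem evalK_update (L y : V → ℤ) (v : V) (c : ℤ) :
    evalK (Function.update L v (L v + c)) y = evalK L y + c * y v := by
  unfold evalK
  have h : ∀ u, Function.update L v (L v + c) u * y u
      = L u * y u + (if u = v then c * y u else 0) := by
    intro u
    rcases eq_or_ne u v with hu | hu <;> simp [hu, Function.update] <;> ring
  simp only [h]
  rw [Finset.sum_add_distrib, Finset.sum_ite_eq' Finset.univ v (fun u => c * y u)]
  simp

theorem IsChar.chAdd {G : WGraph V} {K : V → ℤ} (h : G.IsChar K) (x : V → ℤ) :
    G.IsChar (G.chAdd K x) := by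
  intro y
  have key : evalK (G.chAdd K x) y
      = evalK K y + 2 * ∑ u, G.pair x (eVec {u}) * y u := by
    simp only [evalK, WGraph.chAdd, add_mul, mul_assoc]
    rw [Finset.sum_add_distrib, ← Finset.mul_sum]
  have hy := h y
  simp only [Int.ModEq] at hy ⊢
  rw [key]
  omega

theorem pair_bump (G : WGraph V) (v : V) (y : V → ℤ) :
    (G.bump v).pair y y = G.pair y y + y v * y v := by
  unfold pair bump
  have hu : ∀ u w : V, ((if u = v ∧ w = v then G.M u w + 1 else G.M u w) * y u * y w)
      = G.M u w * y u * y w + (if u = v ∧ w = v then y u * y w else 0) := by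
    intro u w
    rcases eq_or_ne u v with h | h <;> rcases eq_or_ne w v with h' | h' <;>
      simp [h, h'] <;> ring
  simp only [hu, Finset.sum_add_distrib]
  congr 1
  have hin : ∀ u : V, (∑ w, if u = v ∧ w = v then y u * y w else 0)
      = if u = v then y u * y v else 0 := by
    intro u
    rcases eq_or_ne u v with h | h
    · simp [h, Finset.sum_ite_eq' Finset.univ v (fun w => y v * y w)]
    · simp [h]
  rw [Finset.sum_congr rfl (fun u _ => hin u),
    Finset.sum_ite_eq' Finset.univ v (fun u => y u * y v)]
  simp

theorem IsChar.bumpUpdate {G : WGraph V} {L : V → ℤ} (h : G.IsChar L) (v : V) (i : ℤ) :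
    (G.bump v).IsChar (Function.update L v (L v + (2 * i + 1))) := by
  intro y
  have h1 := evalK_update L y v (2 * i + 1)
  have h2 := pair_bump G v y
  have hy := h y
  obtain ⟨k, hk⟩ := Int.even_mul_succ_self (y v - 1)
  have hk' : y v * y v - y v = 2 * k := by
    have h5 : (y v - 1) * (y v - 1 + 1) = y v * y v - y v := by ring
    omega
  have h3 : (2 * i + 1) * y v = 2 * (i * y v) + y v := by ring
  simp only [Int.ModEq] at hy ⊢
  rw [h1, h2, h3]
  omega

theorem IsChar.evenUpdate {G : WGraph V} {L : V → ℤ} (h : G.IsChar L) (v : V) (k : ℤ) :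
    G.IsChar (Function.update L v (L v + 2 * k)) := by
  intro y
  have h1 := evalK_update L y v (2 * k)
  have hy := h y
  have h3 : 2 * k * y v = 2 * (k * y v) := by ring
  simp only [Int.ModEq] at hy ⊢
  rw [h1, h3]
  omega

end WGraph

/-- Extension of `K ∈ Hom(L(G−v),ℤ)` to `Hom(L(G),ℤ)` by the value `t` at `v`:
the vector denoted `(K, t)`. -/
def extV (v : V) (K : {u : V // u ≠ v} → ℤ) (t : ℤ) : V → ℤ :=
  fun u => if h : u = v then t else K ⟨u, h⟩

namespace WGraph

theorem IsChar.extChar {G : WGraph V} {v : V} {K : {u : V // u ≠ v} → ℤ}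
    (h : (G.delete v).IsChar K) {t : ℤ} (ht : t ≡ G.M v v [ZMOD 2]) :
    G.IsChar (extV v K t) := by
  intro y
  have h1 : evalK (extV v K t) y = t * y v + evalK K (fun u => y u.1) := by
    unfold evalK
    rw [sum_split v (fun u => extV v K t u * y u)]
    congr 1
    · simp [extV]
    · exact Finset.sum_congr rfl fun u _ => by simp [extV, u.2]
  have h2 : G.pair y y = (G.delete v).pair (fun u => y u.1) (fun u => y u.1)
      + G.M v v * (y v * y v)
      + 2 * ∑ u : {u : V // u ≠ v}, G.M v u.1 * y v * y u.1 := by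
    have step1 : G.pair y y = (∑ w, G.M v w * y v * y w)
        + ∑ u : {u : V // u ≠ v}, ∑ w, G.M u.1 w * y u.1 * y w :=
      sum_split v (fun u => ∑ w, G.M u w * y u * y w)
    have step2 : (∑ w, G.M v w * y v * y w)
        = G.M v v * y v * y v + ∑ w : {w : V // w ≠ v}, G.M v w.1 * y v * y w.1 :=
      sum_split v _
    have step3 : ∀ u : {u : V // u ≠ v}, (∑ w, G.M u.1 w * y u.1 * y w)
        = G.M u.1 v * y u.1 * y v + ∑ w : {w : V // w ≠ v}, G.M u.1 w.1 * y u.1 * y w.1 :=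
      fun u => sum_split v _
    have step4 : (G.delete v).pair (fun u => y u.1) (fun u => y u.1)
        = ∑ u : {u : V // u ≠ v}, ∑ w : {w : V // w ≠ v}, G.M u.1 w.1 * y u.1 * y w.1 := rfl
    have hc : (∑ u : {u : V // u ≠ v}, G.M u.1 v * y u.1 * y v)
        = ∑ u : {u : V // u ≠ v}, G.M v u.1 * y v * y u.1 := by
      refine Finset.sum_congr rfl fun u _ => ?_
      rw [G.symm u.1 v]; ring
    rw [step1, step2, Finset.sum_congr rfl (fun u _ => step3 u),
      Finset.sum_add_distrib, hc, step4]
    ring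
  have hy := h (fun u => y u.1)
  obtain ⟨k, hk⟩ := Int.even_mul_succ_self (y v - 1)
  have hk' : y v * y v - y v = 2 * k := by
    have h5 : (y v - 1) * (y v - 1 + 1) = y v * y v - y v := by ring
    omega
  obtain ⟨a, ha⟩ : (2:ℤ) ∣ t - G.M v v := Int.ModEq.dvd ht.symm
  have e1 : t * y v = G.M v v * y v + 2 * (a * y v) := by
    have h6 : t = G.M v v + 2 * a := by omega
    rw [h6]; ring
  have e2 : G.M v v * (y v * y v) = G.M v v * y v + 2 * (G.M v v * k) := by
    have h7 : y v * y v = y v + 2 * k := by omega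
    rw [h7]; ring
  simp only [Int.ModEq] at hy ⊢
  rw [h1, h2, e1, e2]
  omega

variable {G : WGraph V}

/-- `K + 2x` as a characteristic vector. -/
def Ch.add (K : G.Ch) (x : V → ℤ) : G.Ch := ⟨G.chAdd K.1 x, K.2.chAdd x⟩

/-- For `K = (K', t) ∈ Char(G)`, the characteristic vector
`(K', t + 2i + 1) ∈ Char(G₊₁(v))`. -/
def Ch.bumpSh (K : G.Ch) (v : V) (i : ℤ) : (G.bump v).Ch :=
  ⟨Function.update K.1 v (K.1 v + (2 * i + 1)), K.2.bumpUpdate v i⟩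

/-- For `K = (K', t) ∈ Char(G)`, the characteristic vector `(K', t + 2k) ∈ Char(G)`. -/
def Ch.evenSh (K : G.Ch) (v : V) (k : ℤ) : G.Ch :=
  ⟨Function.update K.1 v (K.1 v + 2 * k), K.2.evenUpdate v k⟩

/-- For `K ∈ Char(G−v)`, the characteristic vector `(K, m(v) + 2i) ∈ Char(G)`. -/
def Ch.extend {v : V} (K : (G.delete v).Ch) (i : ℤ) : G.Ch :=
  ⟨extV v K.1 (G.M v v + 2 * i),
    K.2.extChar (by show (G.M v v + 2 * i) % 2 = G.M v v % 2; omega)⟩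

end WGraph

/-- `𝒯⁺₀ = 𝔽[U,U⁻¹]/(U·𝔽[U])` over `𝔽 = ℤ/2ℤ`: the coefficient at `d ∈ ℕ` records
the coefficient of `U^{−d}`. -/
def Tplus : Type := ℕ →₀ ZMod 2

instance : AddCommGroup Tplus := inferInstanceAs (AddCommGroup (ℕ →₀ ZMod 2))
instance : Module (ZMod 2) Tplus := inferInstanceAs (Module (ZMod 2) (ℕ →₀ ZMod 2))

/-- The element `U^{-m}` of `𝒯⁺₀`. -/
def Um (m : ℕ) : Tplus := (Finsupp.single m 1 : ℕ →₀ ZMod 2)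

/-- Multiplication by `U^e` on `𝒯⁺₀`: `U^e · U^{−d} = U^{−(d−e)}` (which is `0` if `d < e`). -/
def Upow (e : ℤ) (f : Tplus) : Tplus :=
  (Finsupp.comapDomain (fun d : ℕ => (d : ℤ) + e)
    (Finsupp.embDomain ⟨(Nat.cast : ℕ → ℤ), Nat.cast_injective⟩ (f : ℕ →₀ ZMod 2))
    (fun a _ b _ hab => Nat.cast_injective (add_right_cancel hab)) : ℕ →₀ ZMod 2)

theorem Upow_zero (e : ℤ) : Upow e 0 = 0 := by
  show (Finsupp.comapDomain _ (Finsupp.embDomain _ (0 : ℕ →₀ ZMod 2)) _ : ℕ →₀ ZMod 2)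
    = (0 : ℕ →₀ ZMod 2)
  ext d
  simp

/-- `C⁺(G)`: the `𝔽[U]`-module of finitely supported maps `Char(G) × 𝒫(V) → 𝒯⁺₀`. -/
abbrev Cplus (G : WGraph V) : Type _ := (G.Ch × Finset V) →₀ Tplus

/-- The action of (multiplication by) `U` on `C⁺(G)`. -/
def UC (G : WGraph V) (φ : Cplus G) : Cplus G := Finsupp.mapRange (Upow 1) (Upow_zero 1) φ

/-- `U^{−m} · (K,S)^∨`: the element of `C⁺(G)` supported at the single pair `(K,S)`
with value `U^{−m}`. -/
def dual {G : WGraph V} (p : G.Ch × Finset V) (m : ℕ) : Cplus G :=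
  Finsupp.single p (Um m)

/-- The exponent `q(K,S) − q(K, S−w)`. -/
def dExp₁ (G : WGraph V) (K : V → ℤ) (S : Finset V) (w : V) : ℤ :=
  G.qrel K S - G.qrel K (S.erase w)

/-- The exponent `q(K,S) − q(K + 2E_w, S−w)`. -/
def dExp₂ (G : WGraph V) (K : V → ℤ) (S : Finset V) (w : V) : ℤ :=
  G.qrel K S - (G.qdiff K (eVec {w}) + G.qrel (G.chAdd K (eVec {w})) (S.erase w))

/-- `δ` is the operator on `C⁺(G)` given by
`δ(φ)(K,S) = ∑_{w∈S} [U^{q(K,S)−q(K,S−w)}·φ(K,S−w) + U^{q(K,S)−q(K+2E_w,S−w)}·φ(K+2E_w,S−w)]`. -/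
def IsDelta (G : WGraph V) (δ : Cplus G → Cplus G) : Prop :=
  ∀ (φ : Cplus G) (K : G.Ch) (S : Finset V),
    δ φ (K, S) = ∑ w ∈ S,
      (Upow (dExp₁ G K.1 S w) (φ (K, S.erase w))
        + Upow (dExp₂ G K.1 S w) (φ (K.add (eVec {w}), S.erase w)))

/-- The exponent
`c(i,(K,t),S) = [q((K,t),S) − q(K,t)] − [q'((K,t+2i+1),S) − q'(K,t+2i+1)] + i(i+1)/2`. -/
def cExp (G : WGraph V) (v : V) (i : ℤ) (K : G.Ch) (S : Finset V) : ℤ :=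
  G.qrel K.1 S - (G.bump v).qrel (K.bumpSh v i).1 S + i * (i + 1) / 2

/-- `A` is the map `C⁺(G₊₁(v)) → C⁺(G)` given by
`A(φ)((K,t),S) = ∑_{i∈ℤ} U^{c(i,(K,t),S)} · φ((K,t+2i+1),S)`. -/
def IsA (G : WGraph V) (v : V) (A : Cplus (G.bump v) → Cplus G) : Prop :=
  ∀ (φ : Cplus (G.bump v)) (K : G.Ch) (S : Finset V),
    A φ (K, S) = ∑ᶠ i : ℤ, Upow (cExp G v i K S) (φ (K.bumpSh v i, S))

/-- A subset `S ⊆ V − v` viewed as a subset of `V`. -/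
def liftS (v : V) (S : Finset {u : V // u ≠ v}) : Finset V :=
  S.map ⟨Subtype.val, Subtype.val_injective⟩

/-- `B` is the map `C⁺(G) → C⁺(G−v)` given by
`B(φ)(K,S) = ∑_{i∈ℤ} φ((K, m(v)+2i), S)`. -/
def IsB (G : WGraph V) (v : V) (B : Cplus G → Cplus (G.delete v)) : Prop :=
  ∀ (φ : Cplus G) (K : (G.delete v).Ch) (S : Finset {u : V // u ≠ v}),
    B φ (K, S) = ∑ᶠ i : ℤ, φ (K.extend i, liftS v S)

/-- `r((K,t),S) = q((K,t),S−v) − q((K,t)+2E_v,S−v)` (for `v ∈ S`). -/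
def rVal (G : WGraph V) (v : V) (K : G.Ch) (S : Finset V) : ℤ :=
  G.qrel K.1 (S.erase v)
    - (G.qdiff K.1 (eVec {v}) + G.qrel (G.chAdd K.1 (eVec {v})) (S.erase v))

/-- The lattice cohomology `ℍ⁺`: the homology of the complex `(C⁺, δ)`. -/
abbrev Hlat {G : WGraph V} (δ : Cplus G →ₗ[ZMod 2] Cplus G) : Type _ :=
  LinearMap.ker δ ⧸ (LinearMap.range δ).comap (LinearMap.ker δ).subtype

/-- `𝒟₁ ⊆ C⁺(G)`: the `𝔽`-submodule generated by the `U^{−m}·((K,t),S)^∨` with `v ∈ S`. -/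
def D1 (G : WGraph V) (v : V) : Submodule (ZMod 2) (Cplus G) :=
  Submodule.span (ZMod 2)
    {χ | ∃ (K : G.Ch) (S : Finset V) (m : ℕ), v ∈ S ∧ χ = dual (K, S) m}

/-- `𝒟₂ ⊆ C⁺(G)`: the `𝔽`-submodule generated by the
`U^{−m}·[((K,t),S)^∨ + ((K,t+2),S)^∨]` with `v ∉ S`. -/
def D2 (G : WGraph V) (v : V) : Submodule (ZMod 2) (Cplus G) :=
  Submodule.span (ZMod 2)
    {χ | ∃ (K : G.Ch) (S : Finset V) (m : ℕ), v ∉ S ∧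
      χ = dual (K, S) m + dual (K.evenSh v 1, S) m}


section BHelpers

variable {V : Type*} [Fintype V] [DecidableEq V]

private def embN : ℕ ↪ ℤ := ⟨(Nat.cast : ℕ → ℤ), Nat.cast_injective⟩

theorem Upow_add (e : ℤ) (f g : Tplus) : Upow e (f + g) = Upow e f + Upow e g := by
  show (Finsupp.comapDomain (fun d : ℕ => (d : ℤ) + e)
      (Finsupp.embDomain embN ((f : ℕ →₀ ZMod 2) + (g : ℕ →₀ ZMod 2)))
      (fun a _ b _ hab => Nat.cast_injective (add_right_cancel hab)) : ℕ →₀ ZMod 2)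
    = Finsupp.comapDomain (fun d : ℕ => (d : ℤ) + e) (Finsupp.embDomain embN f)
        (fun a _ b _ hab => Nat.cast_injective (add_right_cancel hab))
      + Finsupp.comapDomain (fun d : ℕ => (d : ℤ) + e) (Finsupp.embDomain embN g)
        (fun a _ b _ hab => Nat.cast_injective (add_right_cancel hab))
  rw [show Finsupp.embDomain embN (f + g) = Finsupp.embDomain embN (f : ℕ →₀ ZMod 2)
      + Finsupp.embDomain embN (g : ℕ →₀ ZMod 2) from Finsupp.embDomain_add ..]
  ext d
  simp [Finsupp.comapDomain_apply]
  rfl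

/-- `Upow e` as an additive monoid homomorphism. -/
def UpowHom (e : ℤ) : Tplus →+ Tplus where
  toFun := Upow e
  map_zero' := Upow_zero e
  map_add' := Upow_add e

theorem UC_apply (G : WGraph V) (φ : Cplus G) (p : G.Ch × Finset V) :
    UC G φ p = Upow 1 (φ p) :=
  Finsupp.mapRange_apply

theorem support_comp_finite {G : WGraph V} (φ : Cplus G) {ι : Type*}
    (g : ι → G.Ch × Finset V) (hg : Function.Injective g) :
    (Function.support fun i => φ (g i)).Finite := by
  have hsub : (Function.support fun i => φ (g i)) ⊆ g ⁻¹' ↑φ.support := by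
    intro i hi
    simpa [Finsupp.mem_support_iff] using hi
  exact Set.Finite.subset (Set.Finite.preimage hg.injOn φ.support.finite_toSet) hsub

theorem extend_injective (G : WGraph V) (v : V) (K : (G.delete v).Ch) :
    Function.Injective fun i : ℤ => (WGraph.Ch.extend (G := G) K i) := by
  intro i j h
  have h' : WGraph.Ch.extend (G := G) K i = WGraph.Ch.extend (G := G) K j := h
  have h2 : (WGraph.Ch.extend (G := G) K i).1 v = (WGraph.Ch.extend (G := G) K j).1 v := by
    rw [h']
  simp only [WGraph.Ch.extend, extV, dif_pos] at h2
  omega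

theorem liftS_erase (v : V) (S : Finset {u : V // u ≠ v}) (w : {u : V // u ≠ v}) :
    (liftS v S).erase w.1 = liftS v (S.erase w) :=
  (Finset.map_erase _ S w).symm

theorem sum_liftS {M : Type*} [AddCommMonoid M] (v : V) (S : Finset {u : V // u ≠ v})
    (f : V → M) : ∑ x ∈ liftS v S, f x = ∑ w ∈ S, f w.1 :=
  Finset.sum_map S _ f

theorem eVec_liftS (v : V) (T : Finset {u : V // u ≠ v}) :
    eVec (liftS v T) = extV v (eVec T) 0 := by
  funext u
  by_cases h : u = v
  · have hv : v ∉ liftS v T := by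
      simp only [liftS, Finset.mem_map, Function.Embedding.coeFn_mk]
      rintro ⟨a, _, hav⟩
      exact a.2 hav
    simp [eVec, extV, hv, h]
  · have : u ∈ liftS v T ↔ (⟨u, h⟩ : {u : V // u ≠ v}) ∈ T := by
      simp only [liftS, Finset.mem_map, Function.Embedding.coeFn_mk]
      constructor
      · rintro ⟨a, ha, rfl⟩; exact ha
      · intro hm; exact ⟨⟨u, h⟩, hm, rfl⟩
    simp [eVec, extV, h, this]

theorem evalK_extV0 (v : V) (L : V → ℤ) (x : {u : V // u ≠ v} → ℤ) :
    evalK L (extV v x 0) = evalK (fun u => L u.1) x := by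
  unfold evalK
  rw [sum_split v (fun u => L u * extV v x 0 u)]
  have h0 : L v * extV v x 0 v = 0 := by simp [extV]
  rw [h0, zero_add]
  exact Finset.sum_congr rfl fun u _ => by simp [extV, u.2]

theorem pair_extV0 (G : WGraph V) (v : V) (x y : {u : V // u ≠ v} → ℤ) :
    G.pair (extV v x 0) (extV v y 0) = (G.delete v).pair x y := by
  unfold WGraph.pair
  rw [sum_split v (fun u => ∑ w, G.M u w * extV v x 0 u * extV v y 0 w)]
  have h1 : (∑ w, G.M v w * extV v x 0 v * extV v y 0 w) = 0 := by
    simp [extV]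
  rw [h1, zero_add]
  refine Finset.sum_congr rfl fun u _ => ?_
  rw [sum_split v (fun w => G.M u.1 w * extV v x 0 u.1 * extV v y 0 w)]
  have h2 : G.M u.1 v * extV v x 0 u.1 * extV v y 0 v = 0 := by simp [extV]
  rw [h2, zero_add]
  refine Finset.sum_congr rfl fun w _ => ?_
  simp [WGraph.delete, extV, u.2, w.2]

theorem qdiff_extV0 (G : WGraph V) (v : V) (L : V → ℤ) (x : {u : V // u ≠ v} → ℤ) :
    G.qdiff L (extV v x 0) = (G.delete v).qdiff (fun u => L u.1) x := by
  unfold WGraph.qdiff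
  rw [evalK_extV0, pair_extV0]

theorem powerset_map_emb {α β : Type*} [DecidableEq β] (f : α ↪ β) (s : Finset α) :
    (s.map f).powerset = s.powerset.map (Finset.mapEmbedding f).toEmbedding := by
  ext t
  simp only [Finset.mem_powerset, Finset.mem_map, RelEmbedding.coe_toEmbedding,
    Finset.mapEmbedding_apply]
  constructor
  · intro ht
    rw [Finset.map_eq_image] at ht
    obtain ⟨u, hu, hut⟩ := Finset.subset_image_iff.mp ht
    exact ⟨u, hu, by rw [Finset.map_eq_image, hut]⟩
  · rintro ⟨u, hu, rfl⟩
    exact Finset.map_subset_map.mpr hu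

theorem qrel_liftS (G : WGraph V) (v : V) (L : V → ℤ) (S : Finset {u : V // u ≠ v}) :
    G.qrel L (liftS v S) = (G.delete v).qrel (fun u => L u.1) S := by
  unfold WGraph.qrel
  apply le_antisymm
  · refine Finset.sup'_le _ _ fun T' hT' => ?_
    rw [Finset.mem_powerset] at hT'
    have hTv : ∀ u ∈ T', u ≠ v := by
      intro u hu
      have hm := hT' hu
      simp only [liftS, Finset.mem_map, Function.Embedding.coeFn_mk] at hm
      obtain ⟨a, _, rfl⟩ := hm
      exact a.2
    have hlift : liftS v (S.filter (fun w => w.1 ∈ T')) = T' := by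
      ext u
      simp only [liftS, Finset.mem_map, Finset.mem_filter,
        Function.Embedding.coeFn_mk]
      constructor
      · rintro ⟨a, ⟨_, ha2⟩, rfl⟩; exact ha2
      · intro hu
        have hm := hT' hu
        simp only [liftS, Finset.mem_map, Function.Embedding.coeFn_mk] at hm
        obtain ⟨a, haS, rfl⟩ := hm
        exact ⟨a, ⟨haS, hu⟩, rfl⟩
    have heq : G.qdiff L (eVec T')
        = (G.delete v).qdiff (fun u => L u.1) (eVec (S.filter (fun w => w.1 ∈ T'))) := by
      conv_lhs => rw [← hlift]
      rw [eVec_liftS, qdiff_extV0]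
    rw [heq]
    exact Finset.le_sup' (fun T => (G.delete v).qdiff (fun u => L u.1) (eVec T))
      (Finset.mem_powerset.mpr (Finset.filter_subset _ S))
  · refine Finset.sup'_le _ _ fun T hT => ?_
    rw [Finset.mem_powerset] at hT
    have heq : (G.delete v).qdiff (fun u => L u.1) (eVec T) = G.qdiff L (eVec (liftS v T)) := by
      rw [eVec_liftS, qdiff_extV0]
    rw [heq]
    exact Finset.le_sup' (fun T => G.qdiff L (eVec T))
      (Finset.mem_powerset.mpr (Finset.map_subset_map.mpr hT))

theorem extend_restrict {G : WGraph V} {v : V} (K : (G.delete v).Ch) (i : ℤ) :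
    (fun u : {u : V // u ≠ v} => (WGraph.Ch.extend (G := G) K i).1 u.1) = K.1 :=
  funext fun u => by simp [WGraph.Ch.extend, extV, u.2]

theorem pair_single (G : WGraph V) (a b : V) : G.pair (eVec {a}) (eVec {b}) = G.M a b := by
  unfold WGraph.pair eVec
  simp [Finset.mem_singleton, mul_ite, ite_mul, mul_zero, mul_one, zero_mul,
    Finset.sum_ite_eq', Finset.mem_univ]

theorem add_extend (G : WGraph V) (v : V) (K : (G.delete v).Ch) (i : ℤ)
    (w : {u : V // u ≠ v}) :
    WGraph.Ch.add (WGraph.Ch.extend (G := G) K i) (eVec {w.1})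
      = WGraph.Ch.extend (WGraph.Ch.add K (eVec {w})) (i + G.M w.1 v) := by
  apply Subtype.ext
  funext u
  show G.chAdd (WGraph.Ch.extend (G := G) K i).1 (eVec {w.1}) u
    = extV v ((G.delete v).chAdd K.1 (eVec {w})) (G.M v v + 2 * (i + G.M w.1 v)) u
  unfold WGraph.chAdd
  rw [pair_single]
  by_cases h : u = v
  · subst h
    simp only [WGraph.Ch.extend, extV, dif_pos]
    ring
  · simp only [WGraph.Ch.extend, extV, dif_neg h]
    rw [pair_single]
    rfl

theorem dExp₁_extend (G : WGraph V) (v : V) (K : (G.delete v).Ch) (i : ℤ)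
    (S : Finset {u : V // u ≠ v}) (w : {u : V // u ≠ v}) :
    dExp₁ G (WGraph.Ch.extend (G := G) K i).1 (liftS v S) w.1
      = dExp₁ (G.delete v) K.1 S w := by
  unfold dExp₁
  rw [liftS_erase, qrel_liftS, qrel_liftS, extend_restrict]

theorem dExp₂_extend (G : WGraph V) (v : V) (K : (G.delete v).Ch) (i : ℤ)
    (S : Finset {u : V // u ≠ v}) (w : {u : V // u ≠ v}) :
    dExp₂ G (WGraph.Ch.extend (G := G) K i).1 (liftS v S) w.1
      = dExp₂ (G.delete v) K.1 S w := by
  unfold dExp₂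
  have h2 : G.chAdd (WGraph.Ch.extend (G := G) K i).1 (eVec {w.1})
      = (WGraph.Ch.extend (WGraph.Ch.add K (eVec {w})) (i + G.M w.1 v)).1 :=
    congrArg Subtype.val (add_extend G v K i w)
  have h1 : ({w.1} : Finset V) = liftS v {w} := by simp [liftS]
  rw [liftS_erase, h2, qrel_liftS, qrel_liftS, extend_restrict, extend_restrict,
    h1, eVec_liftS, qdiff_extV0, extend_restrict]
  rfl

theorem support_Upow {ι : Type*} (e : ℤ) (f : ι → Tplus)
    (hf : (Function.support f).Finite) :
    (Function.support fun i => Upow e (f i)).Finite :=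
  hf.subset (Function.support_comp_subset (Upow_zero e) f)

end BHelpers

/-- The map `B : C⁺(G) → C⁺(G−v)` defined by
`B(φ)(K,S) = ∑_{i∈ℤ} φ((K,m(v)+2i),S)` (for `K ∈ Char(G−v)` and `S ⊆ V−v`) is an
`𝔽[U]`-equivariant chain map, i.e. `δ∘B = B∘δ` and `B` commutes with multiplication by `U`. -/
theorem B_equivariant_chain_map (G : WGraph V) (v : V)
    (δG : Cplus G → Cplus G) (hδG : IsDelta G δG)
    (δG'' : Cplus (G.delete v) → Cplus (G.delete v)) (hδG'' : IsDelta (G.delete v) δG'')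
    (B : Cplus G → Cplus (G.delete v)) (hB : IsB G v B) :
    IsLinearMap (ZMod 2) B ∧ (∀ φ, B (UC G φ) = UC (G.delete v) (B φ)) ∧
      (∀ φ, δG'' (B φ) = B (δG φ)) := by
  classical
  -- finiteness of supports
  have hfin0 : ∀ (φ : Cplus G) (K : (G.delete v).Ch) (T : Finset {u : V // u ≠ v}),
      (Function.support fun i : ℤ => φ (WGraph.Ch.extend K i, liftS v T)).Finite := by
    intro φ K T
    apply support_comp_finite φ (fun i => (WGraph.Ch.extend K i, liftS v T))
    intro i j h
    exact extend_injective G v K (congrArg Prod.fst h)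
  have hBzero : B 0 = 0 := by
    apply Finsupp.ext
    rintro ⟨K, S⟩
    rw [hB]
    simp
  refine ⟨⟨?_, ?_⟩, ?_, ?_⟩
  · -- additivity
    intro φ ψ
    apply Finsupp.ext
    rintro ⟨K, S⟩
    rw [Finsupp.add_apply, hB, hB, hB,
      ← finsum_add_distrib (hfin0 φ K S) (hfin0 ψ K S)]
    exact finsum_congr fun i => Finsupp.add_apply _ _ _
  · -- smul
    intro c φ
    have hc : c = 0 ∨ c = 1 := by
      fin_cases c
      · exact Or.inl rfl
      · exact Or.inr rfl
    rcases hc with rfl | rfl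
    · rw [zero_smul, zero_smul, hBzero]
    · rw [one_smul, one_smul]
  · -- U-equivariance
    intro φ
    apply Finsupp.ext
    rintro ⟨K, S⟩
    rw [hB (UC G φ) K S,
      finsum_congr fun i : ℤ => UC_apply G φ (WGraph.Ch.extend K i, liftS v S),
      UC_apply (G.delete v) (B φ), hB φ K S]
    exact ((UpowHom 1).map_finsum (hfin0 φ K S)).symm
  · -- chain map
    intro φ
    apply Finsupp.ext
    rintro ⟨K, S⟩
    rw [hδG'' (B φ) K S, hB (δG φ) K S]
    have step1 : ∀ i : ℤ, δG φ (WGraph.Ch.extend K i, liftS v S)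
        = ∑ w ∈ S,
            (Upow (dExp₁ (G.delete v) K.1 S w)
                (φ (WGraph.Ch.extend K i, liftS v (S.erase w)))
              + Upow (dExp₂ (G.delete v) K.1 S w)
                  (φ (WGraph.Ch.extend (WGraph.Ch.add K (eVec {w})) (i + G.M w.1 v),
                    liftS v (S.erase w)))) := by
      intro i
      rw [hδG φ (WGraph.Ch.extend K i) (liftS v S), sum_liftS]
      refine Finset.sum_congr rfl fun w _ => ?_
      rw [dExp₁_extend, dExp₂_extend, add_extend, liftS_erase]
    rw [finsum_congr step1]
    have hfA : ∀ w : {u : V // u ≠ v},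
        (Function.support fun i : ℤ => Upow (dExp₁ (G.delete v) K.1 S w)
          (φ (WGraph.Ch.extend K i, liftS v (S.erase w)))).Finite :=
      fun w => support_Upow _ _ (hfin0 φ K (S.erase w))
    have hfB0 : ∀ w : {u : V // u ≠ v},
        (Function.support fun i : ℤ =>
          φ (WGraph.Ch.extend (WGraph.Ch.add K (eVec {w})) (i + G.M w.1 v),
            liftS v (S.erase w))).Finite := by
      intro w
      apply support_comp_finite φ
        (fun i => (WGraph.Ch.extend (WGraph.Ch.add K (eVec {w})) (i + G.M w.1 v),
          liftS v (S.erase w)))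
      intro i j h
      have := extend_injective G v (WGraph.Ch.add K (eVec {w})) (congrArg Prod.fst h)
      omega
    have hfB : ∀ w : {u : V // u ≠ v},
        (Function.support fun i : ℤ => Upow (dExp₂ (G.delete v) K.1 S w)
          (φ (WGraph.Ch.extend (WGraph.Ch.add K (eVec {w})) (i + G.M w.1 v),
            liftS v (S.erase w)))).Finite :=
      fun w => support_Upow _ _ (hfB0 w)
    rw [finsum_sum_comm S _ (fun w _ =>
      ((hfA w).union (hfB w)).subset (Function.support_add _ _))]
    refine Finset.sum_congr rfl fun w _ => ?_
    rw [finsum_add_distrib (hfA w) (hfB w), hB φ K (S.erase w),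
      hB φ (WGraph.Ch.add K (eVec {w})) (S.erase w)]
    congr 1
    · exact (UpowHom (dExp₁ (G.delete v) K.1 S w)).map_finsum
        (hfin0 φ K (S.erase w))
    · have hshift : (∑ᶠ i : ℤ,
          φ (WGraph.Ch.extend (WGraph.Ch.add K (eVec {w})) (i + G.M w.1 v),
            liftS v (S.erase w)))
          = ∑ᶠ j : ℤ, φ (WGraph.Ch.extend (WGraph.Ch.add K (eVec {w})) j,
              liftS v (S.erase w)) := by
        have h := finsum_comp_equiv (Equiv.addRight (G.M w.1 v))
          (f := fun j => φ (WGraph.Ch.extend (WGraph.Ch.add K (eVec {w})) j,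
            liftS v (S.erase w)))
        simpa using h
      rw [← hshift]
      exact (UpowHom (dExp₂ (G.delete v) K.1 S w)).map_finsum (hfB0 w)

end
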